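/- arXiv:2001.02188 — 4 statements merged into one kernel-verified Lean document; each statement's English description precedes it below -/
import Mathlib

section
/- Let m ≥ 1, let N_Σ be a centered Gaussian vector in ℝ^m with covariance matrix Σ, and let F be an ℝ^m-valued random vector with E‖F‖ < ∞, independent of N_Σ. Let h : ℝ^m → ℝ be of class C² with bounded first and second order partial derivatives. Then E[h(N_Σ)] − E[h(F)] = (1/2)·∫_0^1 { t^{−1/2}·Σ_{i=1}^m E[∂_i h(√t·N_Σ + √(1−t)·F)·N_i] − (1−t)^{−1/2}·Σ_{i=1}^m E[∂_i h(√t·N_Σ + √(1−t)·F)·F_i] } dt, where N_i and F_i denote the coordinates of N_Σ and F. -/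
open MeasureTheory ProbabilityTheory Filter
open scoped ENNReal NNReal BigOperators

noncomputable section

abbrev Euc (m : ℕ) := EuclideanSpace ℝ (Fin m)

/-- `ν` is the law of a centered Gaussian random vector in `ℝ^m` with covariance matrix `S`. -/
def IsCenteredGaussianCov {m : ℕ} (ν : Measure (Euc m)) (S : Matrix (Fin m) (Fin m) ℝ) : Prop :=
  IsProbabilityMeasure ν ∧
    ∀ t : Fin m → ℝ,
      ν.map (fun y => ∑ i, t i * y i) =
        gaussianReal 0 (∑ i, ∑ j, t i * S i j * t j).toNNReal

/-- Partial derivative `∂_i f` of a function `f : ℝ^m → ℝ`. -/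
def pd {m : ℕ} (i : Fin m) (f : Euc m → ℝ) (x : Euc m) : ℝ :=
  fderiv ℝ f x (EuclideanSpace.single i 1)

/- ### Auxiliary lemmas -/

lemma euclid_sum_single {m : ℕ} (v : Euc m) :
    ∑ i, v i • EuclideanSpace.single i (1:ℝ) = v := by
  ext j
  rw [WithLp.ofLp_sum, Finset.sum_apply j Finset.univ _]
  simp [EuclideanSpace.single_apply]

lemma clm_apply_eq_sum {m : ℕ} (L : Euc m →L[ℝ] ℝ) (v : Euc m) :
    L v = ∑ i, v i * L (EuclideanSpace.single i 1) := by
  conv_lhs => rw [← euclid_sum_single v]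
  rw [map_sum]
  simp [smul_eq_mul]

lemma abs_coord_le_norm {m : ℕ} (x : Euc m) (i : Fin m) : |x i| ≤ ‖x‖ := by
  rw [EuclideanSpace.norm_eq, ← Real.sqrt_sq_eq_abs]
  apply Real.sqrt_le_sqrt
  have := Finset.single_le_sum (f := fun j => ‖x j‖ ^ 2) (fun j _ => by positivity)
    (Finset.mem_univ i)
  simpa using this

lemma norm_le_sum_abs {m : ℕ} (x : Euc m) : ‖x‖ ≤ ∑ i, |x i| := by
  rw [EuclideanSpace.norm_eq]
  have h1 : ∑ i, |x i| ^ 2 ≤ (∑ i, |x i|) ^ 2 :=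
    Finset.sum_sq_le_sq_sum_of_nonneg (fun i _ => abs_nonneg _)
  simp only [Real.norm_eq_abs]
  calc √(∑ i, |x i| ^ 2) ≤ √((∑ i, |x i|) ^ 2) := Real.sqrt_le_sqrt h1
  _ = ∑ i, |x i| := Real.sqrt_sq (by positivity)

lemma integrable_id_gaussianReal (v : ℝ≥0) :
    Integrable (fun x : ℝ => x) (gaussianReal 0 v) := by
  by_cases hv : v = 0
  · subst hv
    rw [gaussianReal_zero_var]
    exact ⟨aestronglyMeasurable_id, by simp [HasFiniteIntegral, MeasureTheory.lintegral_dirac]⟩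
  · rw [gaussianReal_of_var_ne_zero 0 hv,
      integrable_withDensity_iff (measurable_gaussianPDF 0 v)
        (ae_of_all _ fun x => ENNReal.ofReal_lt_top)]
    have hb : (0:ℝ) < (2 * (v:ℝ))⁻¹ := by positivity
    have H := (integrable_mul_exp_neg_mul_sq hb).mul_const ((Real.sqrt (2 * Real.pi * v))⁻¹)
    refine H.congr (ae_of_all _ fun x => ?_)
    have hv' : (v:ℝ) ≠ 0 := by exact_mod_cast hv
    have hx : -(2 * (v:ℝ))⁻¹ * x ^ 2 = -(x - 0) ^ 2 / (2 * (v:ℝ)) := by field_simp; ring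
    simp only [gaussianPDF_def]
    rw [ENNReal.toReal_ofReal (gaussianPDFReal_nonneg _ _ _), gaussianPDFReal, hx]
    ring

/-- interpolation identity:
`E h(N_Σ) − E h(F)` equals `(1/2)∫₀¹ {t^{-1/2} Σ_i E[∂_i h(√t N + √(1−t) F) N_i]
− (1−t)^{-1/2} Σ_i E[∂_i h(√t N + √(1−t) F) F_i]} dt`. -/
theorem interpolation_identity {m : ℕ} (hm : 1 ≤ m)
    {Ω : Type*} [MeasurableSpace Ω] (P : Measure Ω) [IsProbabilityMeasure P]
    (S : Matrix (Fin m) (Fin m) ℝ)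
    (N F : Ω → Euc m) (hN : Measurable N) (hF : Measurable F)
    (hGauss : IsCenteredGaussianCov (P.map N) S)
    (hindep : IndepFun F N P)
    (hint : Integrable (fun ω => ‖F ω‖) P)
    (h : Euc m → ℝ) (hC2 : ContDiff ℝ 2 h)
    (hbd : ∃ C, ∀ x : Euc m, (∀ i, |pd i h x| ≤ C) ∧ ∀ i j, |pd i (pd j h) x| ≤ C) :
    (∫ ω, h (N ω) ∂P) - ∫ ω, h (F ω) ∂P =
      (1/2) * ∫ t in (0:ℝ)..1,
        ((Real.sqrt t)⁻¹ *
            ∑ i, ∫ ω, pd i h (Real.sqrt t • N ω + Real.sqrt (1-t) • F ω) * N ω i ∂P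
          - (Real.sqrt (1-t))⁻¹ *
            ∑ i, ∫ ω, pd i h (Real.sqrt t • N ω + Real.sqrt (1-t) • F ω) * F ω i ∂P) := by
  obtain ⟨C, hC⟩ := hbd
  have i0 : Fin m := ⟨0, hm⟩
  have hC0 : 0 ≤ C := le_trans (abs_nonneg _) ((hC 0).1 i0)
  -- basic measurability
  have hNi : ∀ i, Measurable (fun ω => N ω i) := fun i => (measurable_pi_apply i).comp (Measurable.comp (WithLp.measurable_ofLp 2 _) hN)
  have hFi : ∀ i, Measurable (fun ω => F ω i) := fun i => (measurable_pi_apply i).comp (Measurable.comp (WithLp.measurable_ofLp 2 _) hF)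
  -- the interpolation process
  set X : ℝ → Ω → Euc m := fun t ω => Real.sqrt t • N ω + Real.sqrt (1-t) • F ω with hX
  have hXmeas : ∀ t, Measurable (X t) := fun t => by
    rw [hX]; exact ((hN.const_smul (Real.sqrt t)).add (hF.const_smul (Real.sqrt (1-t))))
  -- continuity of partial derivatives
  have hdiff : Differentiable ℝ h := hC2.differentiable (by norm_num)
  have hpdcont : ∀ i, Continuous (pd i h) := by
    intro i
    have h1 : Continuous (fderiv ℝ h) := hC2.continuous_fderiv (by norm_num)
    exact ((ContinuousLinearMap.apply ℝ ℝ (EuclideanSpace.single i (1:ℝ))).continuous).comp h1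
  -- integrability of coordinates of N
  have intNi : ∀ i, Integrable (fun ω => N ω i) P := by
    intro i
    have h1 := hGauss.2 (Pi.single i 1)
    have hfun : (fun y : Euc m => ∑ j, (Pi.single i (1:ℝ) : Fin m → ℝ) j * y j) = fun y : Euc m => y i := by
      funext y
      simp [Pi.single_apply]
    rw [hfun, Measure.map_map (show Measurable (fun y : Euc m => y i) from (measurable_pi_apply i).comp (WithLp.measurable_ofLp 2 _)) hN] at h1
    have h2 : Integrable (fun x : ℝ => x) (P.map (fun ω => N ω i)) := by
      rw [show (fun ω => N ω i) = (fun y : Euc m => y i) ∘ N from rfl, h1]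
      exact integrable_id_gaussianReal _
    exact (integrable_map_measure aestronglyMeasurable_id (hNi i).aemeasurable).mp h2
  have intFi : ∀ i, Integrable (fun ω => F ω i) P := fun i =>
    hint.mono' (hFi i).aestronglyMeasurable
      (ae_of_all _ fun ω => by simpa using abs_coord_le_norm (F ω) i)
  have intNsum : Integrable (fun ω => ∑ i, |N ω i|) P :=
    integrable_finset_sum _ (fun i _ => (intNi i).abs)
  have intFsum : Integrable (fun ω => ∑ i, |F ω i|) P :=
    integrable_finset_sum _ (fun i _ => (intFi i).abs)
  have intNnorm : Integrable (fun ω => ‖N ω‖) P :=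
    intNsum.mono' (hN.norm.aestronglyMeasurable)
      (ae_of_all _ fun ω => by simpa using norm_le_sum_abs (N ω))
  -- Lipschitz-type bound on h
  have hfderiv_bound : ∀ x : Euc m, ‖fderiv ℝ h x‖ ≤ C * m := by
    intro x
    refine ContinuousLinearMap.opNorm_le_bound _ (by positivity) fun v => ?_
    rw [clm_apply_eq_sum]
    calc ‖∑ i, v i * (fderiv ℝ h x) (EuclideanSpace.single i 1)‖
        ≤ ∑ i, ‖v i * (fderiv ℝ h x) (EuclideanSpace.single i 1)‖ := norm_sum_le _ _
      _ ≤ ∑ _i : Fin m, C * ‖v‖ := by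
          refine Finset.sum_le_sum fun i _ => ?_
          rw [norm_mul]
          have h1 : ‖v i‖ ≤ ‖v‖ := by
            simpa [Real.norm_eq_abs] using abs_coord_le_norm v i
          have h2 : ‖(fderiv ℝ h x) (EuclideanSpace.single i 1)‖ ≤ C := by
            simpa [Real.norm_eq_abs, pd] using (hC x).1 i
          calc ‖v i‖ * ‖(fderiv ℝ h x) (EuclideanSpace.single i 1)‖ ≤ ‖v‖ * C :=
                mul_le_mul h1 h2 (norm_nonneg _) (norm_nonneg _)
            _ = C * ‖v‖ := mul_comm _ _
      _ = C * m * ‖v‖ := by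
          rw [Finset.sum_const, Finset.card_univ, Fintype.card_fin, nsmul_eq_mul]
          ring
  have hLip : ∀ x : Euc m, |h x| ≤ |h 0| + C * m * ‖x‖ := by
    intro x
    have key : ‖h x - h 0‖ ≤ C * m * ‖x - 0‖ :=
      Convex.norm_image_sub_le_of_norm_fderiv_le (fun y _ => (hdiff y))
        (fun y _ => hfderiv_bound y) convex_univ (Set.mem_univ 0) (Set.mem_univ x)
    rw [sub_zero] at key
    calc |h x| = |(h x - h 0) + h 0| := by ring_nf
      _ ≤ |h x - h 0| + |h 0| := abs_add_le _ _
      _ ≤ C * m * ‖x‖ + |h 0| := by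
          exact add_le_add (by simpa [Real.norm_eq_abs] using key) le_rfl
      _ = |h 0| + C * m * ‖x‖ := by ring
  -- integrands, integrability
  have intPdN : ∀ (t : ℝ) (i : Fin m),
      Integrable (fun ω => pd i h (X t ω) * N ω i) P := by
    intro t i
    exact (intNi i).bdd_mul (((hpdcont i).measurable.comp (hXmeas t)).aestronglyMeasurable)
      (c := C) (ae_of_all _ fun ω => by simpa [Real.norm_eq_abs] using (hC (X t ω)).1 i)
  have intPdF : ∀ (t : ℝ) (i : Fin m),
      Integrable (fun ω => pd i h (X t ω) * F ω i) P := by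
    intro t i
    exact (intFi i).bdd_mul (((hpdcont i).measurable.comp (hXmeas t)).aestronglyMeasurable)
      (c := C) (ae_of_all _ fun ω => by simpa [Real.norm_eq_abs] using (hC (X t ω)).1 i)
  -- rewrite the goal in terms of X
  have hXapp : ∀ (t : ℝ) (ω : Ω),
      Real.sqrt t • N ω + Real.sqrt (1-t) • F ω = X t ω := fun _ _ => rfl
  simp only [hXapp]
  -- continuity of t ↦ X t ω
  have contXω : ∀ ω, Continuous (fun t => X t ω) := by
    intro ω
    exact (Real.continuous_sqrt.smul continuous_const).add
      ((Real.continuous_sqrt.comp (continuous_const.sub continuous_id)).smul continuous_const)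
  have hXle : ∀ t ∈ Set.Icc (0:ℝ) 1, ∀ ω, ‖X t ω‖ ≤ ‖N ω‖ + ‖F ω‖ := by
    intro t ht ω
    calc ‖X t ω‖ ≤ ‖Real.sqrt t • N ω‖ + ‖Real.sqrt (1-t) • F ω‖ := norm_add_le _ _
      _ = Real.sqrt t * ‖N ω‖ + Real.sqrt (1-t) * ‖F ω‖ := by
          rw [norm_smul, norm_smul, Real.norm_eq_abs, Real.norm_eq_abs,
            abs_of_nonneg (Real.sqrt_nonneg _), abs_of_nonneg (Real.sqrt_nonneg _)]
      _ ≤ 1 * ‖N ω‖ + 1 * ‖F ω‖ := by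
          have h1 : Real.sqrt t ≤ 1 := Real.sqrt_le_one.mpr ht.2
          have h2 : Real.sqrt (1-t) ≤ 1 := Real.sqrt_le_one.mpr (by linarith [ht.1])
          have := mul_le_mul_of_nonneg_right h1 (norm_nonneg (N ω))
          have := mul_le_mul_of_nonneg_right h2 (norm_nonneg (F ω))
          linarith
      _ = ‖N ω‖ + ‖F ω‖ := by ring
  -- uniform bound for h ∘ X on [0,1]
  set bound0 : Ω → ℝ := fun ω => |h 0| + C * m * (‖N ω‖ + ‖F ω‖) with hbound0
  have intbound0 : Integrable bound0 P :=
    (integrable_const _).add ((intNnorm.add hint).const_mul _)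
  have hb0 : ∀ t ∈ Set.Icc (0:ℝ) 1, ∀ ω, |h (X t ω)| ≤ bound0 ω := by
    intro t ht ω
    refine (hLip _).trans ?_
    have h1 := hXle t ht ω
    have hCm : (0:ℝ) ≤ C * m := by positivity
    have := mul_le_mul_of_nonneg_left h1 hCm
    simp only [hbound0]
    linarith
  have intH : ∀ t ∈ Set.Icc (0:ℝ) 1, Integrable (fun ω => h (X t ω)) P := by
    intro t ht
    refine intbound0.mono'
      ((hC2.continuous.measurable.comp (hXmeas t)).aestronglyMeasurable)
      (ae_of_all _ fun ω => ?_)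
    simpa [Real.norm_eq_abs] using hb0 t ht ω
  -- continuity of φ on [0,1]
  have contφ : ContinuousOn (fun t => ∫ ω, h (X t ω) ∂P) (Set.Icc 0 1) := by
    rw [continuousOn_iff_continuous_restrict]
    refine continuous_of_dominated (bound := bound0)
      (fun t => (hC2.continuous.measurable.comp (hXmeas t)).aestronglyMeasurable)
      (fun t => ae_of_all _ fun ω => ?_) intbound0
      (ae_of_all _ fun ω => hC2.continuous.comp ((contXω ω).comp continuous_subtype_val))
    simpa [Real.norm_eq_abs] using hb0 t.1 t.2 ω
  -- the pointwise derivative ψ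
  set ψ : ℝ → Ω → ℝ := fun t ω =>
    (2*Real.sqrt t)⁻¹ * (∑ i, pd i h (X t ω) * N ω i)
      - (2*Real.sqrt (1-t))⁻¹ * (∑ i, pd i h (X t ω) * F ω i) with hψ
  have hXderiv : ∀ ω, ∀ t ∈ Set.Ioo (0:ℝ) 1,
      HasDerivAt (fun s => h (X s ω)) (ψ t ω) t := by
    intro ω t ht
    have ht0 : (0:ℝ) < t := ht.1
    have h1t : (0:ℝ) < 1 - t := by linarith [ht.2]
    have d1 : HasDerivAt (fun s : ℝ => Real.sqrt s • N ω) ((1/(2*Real.sqrt t)) • N ω) t :=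
      (Real.hasDerivAt_sqrt ht0.ne').smul_const _
    have dsub : HasDerivAt (fun s : ℝ => 1 - s) (-1) t := by
      simpa using (hasDerivAt_id t).const_sub 1
    have d2' : HasDerivAt (fun s : ℝ => Real.sqrt (1 - s))
        (1/(2*Real.sqrt (1-t)) * (-1)) t :=
      (Real.hasDerivAt_sqrt h1t.ne').comp t dsub
    have d2 : HasDerivAt (fun s : ℝ => Real.sqrt (1-s) • F ω)
        ((1/(2*Real.sqrt (1-t)) * (-1)) • F ω) t := d2'.smul_const _
    have dX : HasDerivAt (fun s => X s ω)
        ((1/(2*Real.sqrt t)) • N ω + (1/(2*Real.sqrt (1-t)) * (-1)) • F ω) t := d1.add d2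
    have dh := (hdiff (X t ω)).hasFDerivAt.comp_hasDerivAt t dX
    have hval : (fderiv ℝ h (X t ω))
        ((1/(2*Real.sqrt t)) • N ω + (1/(2*Real.sqrt (1-t)) * (-1)) • F ω) = ψ t ω := by
      rw [map_add, ContinuousLinearMap.map_smul, ContinuousLinearMap.map_smul, clm_apply_eq_sum _ (N ω), clm_apply_eq_sum _ (F ω)]
      simp only [hψ, pd, smul_eq_mul]
      rw [show ∑ i, N ω i * (fderiv ℝ h (X t ω)) (EuclideanSpace.single i 1)
          = ∑ i, (fderiv ℝ h (X t ω)) (EuclideanSpace.single i 1) * N ω i from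
          Finset.sum_congr rfl fun i _ => mul_comm _ _,
        show ∑ i, F ω i * (fderiv ℝ h (X t ω)) (EuclideanSpace.single i 1)
          = ∑ i, (fderiv ℝ h (X t ω)) (EuclideanSpace.single i 1) * F ω i from
          Finset.sum_congr rfl fun i _ => mul_comm _ _]
      ring
    rw [← hval]
    exact dh
  -- bounds on the sums
  have sumNbd : ∀ (t : ℝ) ω, |∑ i, pd i h (X t ω) * N ω i| ≤ C * ∑ i, |N ω i| := by
    intro t ω
    calc |∑ i, pd i h (X t ω) * N ω i| ≤ ∑ i, |pd i h (X t ω) * N ω i| :=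
          Finset.abs_sum_le_sum_abs _ _
      _ ≤ ∑ i, C * |N ω i| := Finset.sum_le_sum fun i _ => by
          rw [abs_mul]
          exact mul_le_mul_of_nonneg_right ((hC _).1 i) (abs_nonneg _)
      _ = C * ∑ i, |N ω i| := by rw [Finset.mul_sum]
  have sumFbd : ∀ (t : ℝ) ω, |∑ i, pd i h (X t ω) * F ω i| ≤ C * ∑ i, |F ω i| := by
    intro t ω
    calc |∑ i, pd i h (X t ω) * F ω i| ≤ ∑ i, |pd i h (X t ω) * F ω i| :=
          Finset.abs_sum_le_sum_abs _ _
      _ ≤ ∑ i, C * |F ω i| := Finset.sum_le_sum fun i _ => by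
          rw [abs_mul]
          exact mul_le_mul_of_nonneg_right ((hC _).1 i) (abs_nonneg _)
      _ = C * ∑ i, |F ω i| := by rw [Finset.mul_sum]
  have ψmeas : ∀ t : ℝ, Measurable (ψ t) := by
    intro t
    refine Measurable.sub (Measurable.const_mul ?_ _) (Measurable.const_mul ?_ _)
    · exact Finset.measurable_sum _ fun i _ =>
        ((hpdcont i).measurable.comp (hXmeas t)).mul (hNi i)
    · exact Finset.measurable_sum _ fun i _ =>
        ((hpdcont i).measurable.comp (hXmeas t)).mul (hFi i)
  -- derivative of φ with identification of the value
  have keyderiv : ∀ t ∈ Set.Ioo (0:ℝ) 1,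
      HasDerivAt (fun s => ∫ ω, h (X s ω) ∂P)
        ((1/2) * ((Real.sqrt t)⁻¹ * ∑ i, ∫ ω, pd i h (X t ω) * N ω i ∂P
          - (Real.sqrt (1-t))⁻¹ * ∑ i, ∫ ω, pd i h (X t ω) * F ω i ∂P)) t := by
    intro t₀ ht₀
    have ht0 : (0:ℝ) < t₀ := ht₀.1
    have ht1 : t₀ < 1 := ht₀.2
    set ε := min t₀ (1-t₀) / 2 with hε
    have hεpos : 0 < ε := div_pos (lt_min ht0 (by linarith)) two_pos
    have hmin1 : ε ≤ t₀/2 := by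
      rw [hε]
      have := min_le_left t₀ (1-t₀)
      linarith
    have hmin2 : ε ≤ (1-t₀)/2 := by
      rw [hε]
      have := min_le_right t₀ (1-t₀)
      linarith
    have hball : ∀ s ∈ Metric.ball t₀ ε, t₀/2 < s ∧ (1-t₀)/2 < 1 - s ∧ s ∈ Set.Ioo (0:ℝ) 1 := by
      intro s hs
      rw [Metric.mem_ball, Real.dist_eq, abs_lt] at hs
      refine ⟨by linarith [hs.1], by linarith [hs.2], by constructor <;> [linarith [hs.1]; linarith [hs.2]]⟩
    set bound1 : Ω → ℝ := fun ω =>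
      (2*Real.sqrt (t₀/2))⁻¹ * (C * ∑ i, |N ω i|)
        + (2*Real.sqrt ((1-t₀)/2))⁻¹ * (C * ∑ i, |F ω i|) with hbound1
    have intbound1 : Integrable bound1 P :=
      ((intNsum.const_mul C).const_mul _).add ((intFsum.const_mul C).const_mul _)
    have hbd1 : ∀ ω, ∀ s ∈ Metric.ball t₀ ε, ‖ψ s ω‖ ≤ bound1 ω := by
      intro ω s hs
      obtain ⟨hs1, hs2, _⟩ := hball s hs
      have hsqrt1 : (2*Real.sqrt s)⁻¹ ≤ (2*Real.sqrt (t₀/2))⁻¹ := by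
        have hpos : (0:ℝ) < t₀/2 := by linarith
        apply inv_anti₀ (by positivity)
        have := Real.sqrt_le_sqrt hs1.le
        linarith
      have hsqrt2 : (2*Real.sqrt (1-s))⁻¹ ≤ (2*Real.sqrt ((1-t₀)/2))⁻¹ := by
        have hpos : (0:ℝ) < (1-t₀)/2 := by linarith
        apply inv_anti₀ (by positivity)
        have := Real.sqrt_le_sqrt hs2.le
        linarith
      have hinv1 : (0:ℝ) ≤ (2*Real.sqrt s)⁻¹ := by positivity
      have hinv2 : (0:ℝ) ≤ (2*Real.sqrt (1-s))⁻¹ := by positivity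
      calc ‖ψ s ω‖
          ≤ |(2*Real.sqrt s)⁻¹ * (∑ i, pd i h (X s ω) * N ω i)|
            + |(2*Real.sqrt (1-s))⁻¹ * (∑ i, pd i h (X s ω) * F ω i)| := by
            rw [hψ]
            exact (abs_sub _ _)
        _ ≤ (2*Real.sqrt (t₀/2))⁻¹ * (C * ∑ i, |N ω i|)
            + (2*Real.sqrt ((1-t₀)/2))⁻¹ * (C * ∑ i, |F ω i|) := by
            rw [abs_mul, abs_mul, abs_of_nonneg hinv1, abs_of_nonneg hinv2]
            refine add_le_add (mul_le_mul hsqrt1 (sumNbd s ω) (abs_nonneg _) (by positivity))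
              (mul_le_mul hsqrt2 (sumFbd s ω) (abs_nonneg _) (by positivity))
        _ = bound1 ω := rfl
    obtain ⟨-, hder⟩ := hasDerivAt_integral_of_dominated_loc_of_deriv_le (Metric.ball_mem_nhds t₀ hεpos)
      (Filter.Eventually.of_forall fun s =>
        (hC2.continuous.measurable.comp (hXmeas s)).aestronglyMeasurable)
      (intH t₀ ⟨ht0.le, ht1.le⟩)
      ((ψmeas t₀).aestronglyMeasurable)
      (ae_of_all _ hbd1)
      intbound1
      (ae_of_all _ fun ω s hs => hXderiv ω s (hball s hs).2.2)
    have hval : ∫ ω, ψ t₀ ω ∂P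
        = (1/2) * ((Real.sqrt t₀)⁻¹ * ∑ i, ∫ ω, pd i h (X t₀ ω) * N ω i ∂P
          - (Real.sqrt (1-t₀))⁻¹ * ∑ i, ∫ ω, pd i h (X t₀ ω) * F ω i ∂P) := by
      simp only [hψ]
      rw [integral_sub
          ((integrable_finset_sum _ fun i _ => intPdN t₀ i).const_mul _)
          ((integrable_finset_sum _ fun i _ => intPdF t₀ i).const_mul _),
        integral_const_mul, integral_const_mul,
        integral_finset_sum _ (fun i _ => intPdN t₀ i),
        integral_finset_sum _ (fun i _ => intPdF t₀ i)]
      have e1 : (2*Real.sqrt t₀)⁻¹ = (1/2) * (Real.sqrt t₀)⁻¹ := by rw [mul_inv]; ring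
      have e2 : (2*Real.sqrt (1-t₀))⁻¹ = (1/2) * (Real.sqrt (1-t₀))⁻¹ := by rw [mul_inv]; ring
      rw [e1, e2]; ring
    rw [← hval]
    exact hder
  -- continuity in t of the coordinate integrals
  have contGi : ∀ i, Continuous (fun t => ∫ ω, pd i h (X t ω) * N ω i ∂P) := by
    intro i
    refine continuous_of_dominated (bound := fun ω => C * |N ω i|)
      (fun t => (((hpdcont i).measurable.comp (hXmeas t)).mul (hNi i)).aestronglyMeasurable)
      (fun t => ae_of_all _ fun ω => ?_) ((intNi i).abs.const_mul C)
      (ae_of_all _ fun ω => (((hpdcont i).comp (contXω ω)).mul continuous_const))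
    rw [Real.norm_eq_abs, abs_mul]
    exact mul_le_mul_of_nonneg_right ((hC _).1 i) (abs_nonneg _)
  have contHi : ∀ i, Continuous (fun t => ∫ ω, pd i h (X t ω) * F ω i ∂P) := by
    intro i
    refine continuous_of_dominated (bound := fun ω => C * |F ω i|)
      (fun t => (((hpdcont i).measurable.comp (hXmeas t)).mul (hFi i)).aestronglyMeasurable)
      (fun t => ae_of_all _ fun ω => ?_) ((intFi i).abs.const_mul C)
      (ae_of_all _ fun ω => (((hpdcont i).comp (contXω ω)).mul continuous_const))
    rw [Real.norm_eq_abs, abs_mul]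
    exact mul_le_mul_of_nonneg_right ((hC _).1 i) (abs_nonneg _)
  -- the bracket function
  set brk : ℝ → ℝ := fun t =>
    (Real.sqrt t)⁻¹ * ∑ i, ∫ ω, pd i h (X t ω) * N ω i ∂P
      - (Real.sqrt (1-t))⁻¹ * ∑ i, ∫ ω, pd i h (X t ω) * F ω i ∂P with hbrk
  have measbrk : Measurable brk := by
    refine Measurable.sub (Measurable.mul ?_ ?_) (Measurable.mul ?_ ?_)
    · exact Real.continuous_sqrt.measurable.inv
    · exact (continuous_finset_sum _ fun i _ => contGi i).measurable
    · exact (Real.continuous_sqrt.comp (continuous_const.sub continuous_id)).measurable.inv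
    · exact (continuous_finset_sum _ fun i _ => contHi i).measurable
  -- bounds for the bracket
  set A : ℝ := C * ∫ ω, ∑ i, |N ω i| ∂P with hA
  set B : ℝ := C * ∫ ω, ∑ i, |F ω i| ∂P with hB
  have hGbd : ∀ t : ℝ, |∑ i, ∫ ω, pd i h (X t ω) * N ω i ∂P| ≤ A := by
    intro t
    calc |∑ i, ∫ ω, pd i h (X t ω) * N ω i ∂P|
        ≤ ∑ i, |∫ ω, pd i h (X t ω) * N ω i ∂P| := Finset.abs_sum_le_sum_abs _ _
      _ ≤ ∑ i, ∫ ω, C * |N ω i| ∂P := by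
          refine Finset.sum_le_sum fun i _ => ?_
          refine le_trans ?_ (integral_mono (intPdN t i).abs ((intNi i).abs.const_mul C)
            (fun ω => by
              rw [abs_mul]
              exact mul_le_mul_of_nonneg_right ((hC _).1 i) (abs_nonneg _)))
          simpa only [Real.norm_eq_abs] using
            norm_integral_le_integral_norm (μ := P) (fun ω => pd i h (X t ω) * N ω i)
      _ = A := by
          rw [hA, ← integral_finset_sum _ (fun i _ => (intNi i).abs.const_mul C)]
          rw [← integral_const_mul]
          congr 1
          funext ω
          rw [Finset.mul_sum]
  have hHbd : ∀ t : ℝ, |∑ i, ∫ ω, pd i h (X t ω) * F ω i ∂P| ≤ B := by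
    intro t
    calc |∑ i, ∫ ω, pd i h (X t ω) * F ω i ∂P|
        ≤ ∑ i, |∫ ω, pd i h (X t ω) * F ω i ∂P| := Finset.abs_sum_le_sum_abs _ _
      _ ≤ ∑ i, ∫ ω, C * |F ω i| ∂P := by
          refine Finset.sum_le_sum fun i _ => ?_
          refine le_trans ?_ (integral_mono (intPdF t i).abs ((intFi i).abs.const_mul C)
            (fun ω => by
              rw [abs_mul]
              exact mul_le_mul_of_nonneg_right ((hC _).1 i) (abs_nonneg _)))
          simpa only [Real.norm_eq_abs] using
            norm_integral_le_integral_norm (μ := P) (fun ω => pd i h (X t ω) * F ω i)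
      _ = B := by
          rw [hB, ← integral_finset_sum _ (fun i _ => (intFi i).abs.const_mul C)]
          rw [← integral_const_mul]
          congr 1
          funext ω
          rw [Finset.mul_sum]
  -- interval integrability of the majorant
  have ii1 : IntervalIntegrable (fun t => (Real.sqrt t)⁻¹) MeasureTheory.volume 0 1 := by
    have h1 : IntervalIntegrable (fun t : ℝ => t ^ (-(1/2) : ℝ)) MeasureTheory.volume 0 1 :=
      intervalIntegral.intervalIntegrable_rpow' (by norm_num)
    rw [intervalIntegrable_iff] at h1 ⊢
    refine h1.congr ((ae_restrict_iff' measurableSet_uIoc).2 (ae_of_all _ fun t ht => ?_))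
    rw [Set.uIoc_of_le (by norm_num : (0:ℝ) ≤ 1)] at ht
    show t ^ (-(1/2) : ℝ) = (Real.sqrt t)⁻¹
    rw [Real.rpow_neg ht.1.le, ← Real.sqrt_eq_rpow]
  have ii2 : IntervalIntegrable (fun t => (Real.sqrt (1-t))⁻¹) MeasureTheory.volume 0 1 := by
    have h2 := (ii1.comp_sub_left 1).symm
    simpa using h2
  have iimaj : IntervalIntegrable (fun t => (Real.sqrt t)⁻¹ * A + (Real.sqrt (1-t))⁻¹ * B)
      MeasureTheory.volume 0 1 := (ii1.mul_const A).add (ii2.mul_const B)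
  have iibrk : IntervalIntegrable (fun t => (1/2) * brk t) MeasureTheory.volume 0 1 := by
    rw [intervalIntegrable_iff] at iimaj ⊢
    refine iimaj.mono' ((measbrk.const_mul _).aestronglyMeasurable)
      ((ae_restrict_iff' measurableSet_uIoc).2 (ae_of_all _ fun t ht => ?_))
    have hb : |brk t| ≤ (Real.sqrt t)⁻¹ * A + (Real.sqrt (1-t))⁻¹ * B := by
      rw [hbrk]
      have i1 : (0:ℝ) ≤ (Real.sqrt t)⁻¹ := by positivity
      have i2 : (0:ℝ) ≤ (Real.sqrt (1-t))⁻¹ := by positivity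
      calc |(Real.sqrt t)⁻¹ * ∑ i, ∫ ω, pd i h (X t ω) * N ω i ∂P
          - (Real.sqrt (1-t))⁻¹ * ∑ i, ∫ ω, pd i h (X t ω) * F ω i ∂P|
          ≤ |(Real.sqrt t)⁻¹ * ∑ i, ∫ ω, pd i h (X t ω) * N ω i ∂P|
            + |(Real.sqrt (1-t))⁻¹ * ∑ i, ∫ ω, pd i h (X t ω) * F ω i ∂P| := abs_sub _ _
        _ ≤ (Real.sqrt t)⁻¹ * A + (Real.sqrt (1-t))⁻¹ * B := by
            rw [abs_mul, abs_mul, abs_of_nonneg i1, abs_of_nonneg i2]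
            exact add_le_add (mul_le_mul_of_nonneg_left (hGbd t) i1)
              (mul_le_mul_of_nonneg_left (hHbd t) i2)
    rw [Real.norm_eq_abs, abs_mul]
    calc |1/2| * |brk t| ≤ 1 * |brk t| := by
          apply mul_le_mul_of_nonneg_right _ (abs_nonneg _)
          rw [abs_of_nonneg]; norm_num; norm_num
      _ = |brk t| := one_mul _
      _ ≤ _ := hb
  -- FTC
  have hFTC := intervalIntegral.integral_eq_sub_of_hasDeriv_right_of_le
    (by norm_num : (0:ℝ) ≤ 1) contφ
    (fun t ht => ((keyderiv t ht).hasDerivWithinAt)) iibrk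
  have hφ1 : ∫ ω, h (X 1 ω) ∂P = ∫ ω, h (N ω) ∂P := by
    congr 1
    funext ω
    simp [hX]
  have hφ0 : ∫ ω, h (X 0 ω) ∂P = ∫ ω, h (F ω) ∂P := by
    congr 1
    funext ω
    simp [hX]
  rw [← intervalIntegral.integral_const_mul]
  rw [hFTC, hφ1, hφ0]
end
end

section
/- Let ρ : ℤ → ℝ, let n ≥ 1 be an integer and let b ∈ [1,2]. Then Σ_{i,j,k,ℓ=0}^{n−1} ρ(j−k)²·|ρ(i−j)·ρ(k−ℓ)| ≤ n·(2n)^{(2b−2)/b}·(Σ_{|k|<n} ρ(k)²)·(Σ_{|k|<n} |ρ(k)|^b)^{2/b}. -/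
open scoped BigOperators

/-- for `b ∈ [1,2]`,
`Σ_{i,j,k,ℓ=0}^{n−1} ρ(j−k)²|ρ(i−j)ρ(k−ℓ)| ≤ n·(2n)^{(2b−2)/b}·(Σ_{|k|<n}ρ(k)²)·(Σ_{|k|<n}|ρ(k)|^b)^{2/b}`. -/
theorem quadruple_sum_rank_two_bound (ρ : ℤ → ℝ) (n : ℕ) (hn : 1 ≤ n)
    (b : ℝ) (hb1 : 1 ≤ b) (hb2 : b ≤ 2) :
    (∑ i ∈ Finset.range n, ∑ j ∈ Finset.range n, ∑ k ∈ Finset.range n,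
        ∑ l ∈ Finset.range n, ρ ((j:ℤ) - k) ^ 2 * |ρ ((i:ℤ) - j) * ρ ((k:ℤ) - l)|) ≤
      (n : ℝ) * ((2 * n : ℝ)) ^ ((2 * b - 2) / b) *
        (∑ k ∈ Finset.Ioo (-(n:ℤ)) (n:ℤ), ρ k ^ 2) *
        (∑ k ∈ Finset.Ioo (-(n:ℤ)) (n:ℤ), |ρ k| ^ b) ^ (2 / b) := by
  have hb0 : (0:ℝ) < b := lt_of_lt_of_le one_pos hb1
  set S1 : ℝ := ∑ k ∈ Finset.Ioo (-(n:ℤ)) (n:ℤ), |ρ k| with hS1def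
  set S2 : ℝ := ∑ k ∈ Finset.Ioo (-(n:ℤ)) (n:ℤ), ρ k ^ 2 with hS2def
  set T : ℝ := ∑ k ∈ Finset.Ioo (-(n:ℤ)) (n:ℤ), |ρ k| ^ b with hTdef
  have hS1 : 0 ≤ S1 := Finset.sum_nonneg fun _ _ => abs_nonneg _
  have hS2 : 0 ≤ S2 := Finset.sum_nonneg fun _ _ => sq_nonneg _
  have hT : 0 ≤ T := Finset.sum_nonneg fun _ _ => Real.rpow_nonneg (abs_nonneg _) _
  -- generic sublemma: sums of shifted nonneg functions over range n are ≤ sums over Ioo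
  have hshift : ∀ (f : ℤ → ℝ), (∀ m, 0 ≤ f m) → ∀ c : ℤ, 0 ≤ c → c < n →
      (∑ i ∈ Finset.range n, f ((i:ℤ) - c) ≤ ∑ m ∈ Finset.Ioo (-(n:ℤ)) (n:ℤ), f m) ∧
      (∑ i ∈ Finset.range n, f (c - (i:ℤ)) ≤ ∑ m ∈ Finset.Ioo (-(n:ℤ)) (n:ℤ), f m) := by
    intro f hf c hc1 hc2
    constructor
    · rw [show (∑ i ∈ Finset.range n, f ((i:ℤ) - c))
          = ∑ m ∈ (Finset.range n).image (fun i : ℕ => (i:ℤ) - c), f m from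
        (Finset.sum_image (by intro x _ y _ h; simp at h; omega)).symm]
      apply Finset.sum_le_sum_of_subset_of_nonneg
      · intro m hm
        simp only [Finset.mem_image, Finset.mem_range] at hm
        obtain ⟨i, hi, rfl⟩ := hm
        simp only [Finset.mem_Ioo]; omega
      · intro _ _ _; exact hf _
    · rw [show (∑ i ∈ Finset.range n, f (c - (i:ℤ)))
          = ∑ m ∈ (Finset.range n).image (fun i : ℕ => c - (i:ℤ)), f m from
        (Finset.sum_image (by intro x _ y _ h; simp at h; omega)).symm]
      apply Finset.sum_le_sum_of_subset_of_nonneg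
      · intro m hm
        simp only [Finset.mem_image, Finset.mem_range] at hm
        obtain ⟨i, hi, rfl⟩ := hm
        simp only [Finset.mem_Ioo]; omega
      · intro _ _ _; exact hf _
  have hA : ∀ j ∈ Finset.range n, ∑ i ∈ Finset.range n, |ρ ((i:ℤ) - j)| ≤ S1 := by
    intro j hj
    simp only [Finset.mem_range] at hj
    exact (hshift (fun m => |ρ m|) (fun m => abs_nonneg _) j (by omega) (by omega)).1
  have hB : ∀ k ∈ Finset.range n, ∑ l ∈ Finset.range n, |ρ ((k:ℤ) - l)| ≤ S1 := by
    intro k hk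
    simp only [Finset.mem_range] at hk
    exact (hshift (fun m => |ρ m|) (fun m => abs_nonneg _) k (by omega) (by omega)).2
  have hC : ∀ j ∈ Finset.range n, ∑ k ∈ Finset.range n, ρ ((j:ℤ) - k) ^ 2 ≤ S2 := by
    intro j hj
    simp only [Finset.mem_range] at hj
    exact (hshift (fun m => ρ m ^ 2) (fun m => sq_nonneg _) j (by omega) (by omega)).2
  have step1 : (∑ i ∈ Finset.range n, ∑ j ∈ Finset.range n, ∑ k ∈ Finset.range n,
        ∑ l ∈ Finset.range n, ρ ((j:ℤ) - k) ^ 2 * |ρ ((i:ℤ) - j) * ρ ((k:ℤ) - l)|)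
      ≤ (n:ℝ) * S2 * S1 ^ 2 := by
    calc (∑ i ∈ Finset.range n, ∑ j ∈ Finset.range n, ∑ k ∈ Finset.range n,
        ∑ l ∈ Finset.range n, ρ ((j:ℤ) - k) ^ 2 * |ρ ((i:ℤ) - j) * ρ ((k:ℤ) - l)|)
        = ∑ i ∈ Finset.range n, ∑ j ∈ Finset.range n, ∑ k ∈ Finset.range n,
          (ρ ((j:ℤ) - k) ^ 2 * |ρ ((i:ℤ) - j)|) * ∑ l ∈ Finset.range n, |ρ ((k:ℤ) - l)| := by
          simp_rw [abs_mul, ← mul_assoc, ← Finset.mul_sum]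
      _ ≤ ∑ i ∈ Finset.range n, ∑ j ∈ Finset.range n, ∑ k ∈ Finset.range n,
          (ρ ((j:ℤ) - k) ^ 2 * |ρ ((i:ℤ) - j)|) * S1 := by
          refine Finset.sum_le_sum fun i _ => Finset.sum_le_sum fun j _ =>
            Finset.sum_le_sum fun k hk => ?_
          exact mul_le_mul_of_nonneg_left (hB k hk) (by positivity)
      _ = ∑ i ∈ Finset.range n, ∑ j ∈ Finset.range n,
          (|ρ ((i:ℤ) - j)| * S1) * ∑ k ∈ Finset.range n, ρ ((j:ℤ) - k) ^ 2 := by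
          refine Finset.sum_congr rfl fun i _ => Finset.sum_congr rfl fun j _ => ?_
          rw [Finset.mul_sum]
          exact Finset.sum_congr rfl fun k _ => by ring
      _ ≤ ∑ i ∈ Finset.range n, ∑ j ∈ Finset.range n, (|ρ ((i:ℤ) - j)| * S1) * S2 := by
          refine Finset.sum_le_sum fun i _ => Finset.sum_le_sum fun j hj => ?_
          exact mul_le_mul_of_nonneg_left (hC j hj) (by positivity)
      _ = ∑ j ∈ Finset.range n, (∑ i ∈ Finset.range n, |ρ ((i:ℤ) - j)|) * (S1 * S2) := by
          rw [Finset.sum_comm]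
          refine Finset.sum_congr rfl fun j _ => ?_
          rw [Finset.sum_mul]
          exact Finset.sum_congr rfl fun i _ => by ring
      _ ≤ ∑ j ∈ Finset.range n, S1 * (S1 * S2) := by
          refine Finset.sum_le_sum fun j hj => ?_
          exact mul_le_mul_of_nonneg_right (hA j hj) (by positivity)
      _ = (n:ℝ) * S2 * S1 ^ 2 := by
          rw [Finset.sum_const, Finset.card_range, nsmul_eq_mul]; ring
  -- Hölder step
  have hcard : ((Finset.Ioo (-(n:ℤ)) (n:ℤ)).card : ℝ) ≤ 2 * n := by
    have : (Finset.Ioo (-(n:ℤ)) (n:ℤ)).card = 2 * n - 1 := by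
      rw [Int.card_Ioo]; omega
    rw [this]
    push_cast [Nat.cast_sub (by omega : 1 ≤ 2 * n)]
    linarith
  have hexp : 0 ≤ (2 * b - 2) / b := div_nonneg (by linarith) hb0.le
  have hold : S1 ^ b ≤ ((Finset.Ioo (-(n:ℤ)) (n:ℤ)).card : ℝ) ^ (b - 1) * T :=
    Real.rpow_sum_le_const_mul_sum_rpow _ ρ hb1
  have key : S1 ^ 2 ≤ ((2 * n : ℝ)) ^ ((2 * b - 2) / b) * T ^ (2 / b) := by
    have h2 : S1 ^ (2:ℝ) = (S1 ^ b) ^ (2 / b) := by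
      rw [← Real.rpow_natCast S1 2] at *
      rw [← Real.rpow_mul hS1]
      congr 1
      field_simp
    have h3 : (S1 ^ b) ^ (2 / b) ≤ (((Finset.Ioo (-(n:ℤ)) (n:ℤ)).card : ℝ) ^ (b - 1) * T) ^ (2 / b) :=
      Real.rpow_le_rpow (Real.rpow_nonneg hS1 b) hold (by positivity)
    have h4 : (((Finset.Ioo (-(n:ℤ)) (n:ℤ)).card : ℝ) ^ (b - 1) * T) ^ (2 / b)
        = (((Finset.Ioo (-(n:ℤ)) (n:ℤ)).card : ℝ)) ^ ((2 * b - 2) / b) * T ^ (2 / b) := by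
      rw [Real.mul_rpow (Real.rpow_nonneg (Nat.cast_nonneg _) _) hT,
        ← Real.rpow_mul (Nat.cast_nonneg _)]
      congr 2
      field_simp
    have h5 : (((Finset.Ioo (-(n:ℤ)) (n:ℤ)).card : ℝ)) ^ ((2 * b - 2) / b)
        ≤ ((2 * n : ℝ)) ^ ((2 * b - 2) / b) :=
      Real.rpow_le_rpow (Nat.cast_nonneg _) hcard hexp
    calc S1 ^ 2 = S1 ^ (2:ℝ) := (Real.rpow_natCast S1 2).symm
      _ = (S1 ^ b) ^ (2 / b) := h2
      _ ≤ _ := h3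
      _ = _ := h4
      _ ≤ ((2 * n : ℝ)) ^ ((2 * b - 2) / b) * T ^ (2 / b) :=
        mul_le_mul_of_nonneg_right h5 (Real.rpow_nonneg hT _)
  calc _ ≤ (n:ℝ) * S2 * S1 ^ 2 := step1
    _ ≤ (n:ℝ) * S2 * (((2 * n : ℝ)) ^ ((2 * b - 2) / b) * T ^ (2 / b)) :=
      mul_le_mul_of_nonneg_left key (by positivity)
    _ = (n : ℝ) * ((2 * n : ℝ)) ^ ((2 * b - 2) / b) * S2 * T ^ (2 / b) := by ring
end

section
/- Let ρ : ℤ → ℝ and let n ≥ 1 be an integer. Set ρ_n(k) := |ρ(k)|·1_{|k|<n} and 1_n(k) := 1_{|k|<n}. Then Σ_{i,j,k,ℓ=0}^{n−1} ρ(j−k)²·|ρ(i−j)·ρ(k−ℓ)| ≤ n·‖ρ_n ∗ 1_n‖_{ℓ²(ℤ)}·(Σ_{|k|<n} ρ(k)²)^{3/2}. -/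
open scoped BigOperators

set_option maxHeartbeats 1000000

noncomputable section

/-- Convolution of two functions on `ℤ`. -/
def zconv (f g : ℤ → ℝ) (k : ℤ) : ℝ := ∑' j : ℤ, f j * g (k - j)

/-- The `ℓ²(ℤ)` norm of a function on `ℤ`. -/
def l2normZ (f : ℤ → ℝ) : ℝ := Real.sqrt (∑' k : ℤ, f k ^ 2)

lemma sum_shift_le (f : ℤ → ℝ) (hf : ∀ m, 0 ≤ f m) (n j : ℕ) (hj : j < n) :
    ∑ k ∈ Finset.range n, f ((j:ℤ) - k) ≤ ∑ m ∈ Finset.Ioo (-(n:ℤ)) (n:ℤ), f m := by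
  have himg : ∑ m ∈ (Finset.range n).image (fun k : ℕ => (j:ℤ) - k), f m
      = ∑ k ∈ Finset.range n, f ((j:ℤ) - k) :=
    Finset.sum_image (fun a _ b _ h => by simpa using h)
  rw [← himg]
  apply Finset.sum_le_sum_of_subset_of_nonneg
  · intro m hm
    simp only [Finset.mem_image, Finset.mem_range] at hm
    obtain ⟨k, hk, rfl⟩ := hm
    simp only [Finset.mem_Ioo]
    omega
  · intro m _ _; exact hf m

/-- with `ρ_n(k) = |ρ(k)|·1_{|k|<n}` and `1_n(k) = 1_{|k|<n}`,
`Σ_{i,j,k,ℓ=0}^{n−1} ρ(j−k)²|ρ(i−j)ρ(k−ℓ)| ≤ n·‖ρ_n ∗ 1_n‖_{ℓ²}·(Σ_{|k|<n}ρ(k)²)^{3/2}`. -/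
theorem quadruple_sum_le_conv_l2 (ρ : ℤ → ℝ) (n : ℕ) (hn : 1 ≤ n) :
    (∑ i ∈ Finset.range n, ∑ j ∈ Finset.range n, ∑ k ∈ Finset.range n,
        ∑ l ∈ Finset.range n, ρ ((j:ℤ) - k) ^ 2 * |ρ ((i:ℤ) - j) * ρ ((k:ℤ) - l)|) ≤
      (n : ℝ) *
        l2normZ (zconv (fun k => if |k| < (n:ℤ) then |ρ k| else 0)
          (fun k => if |k| < (n:ℤ) then (1:ℝ) else 0)) *
        (∑ k ∈ Finset.Ioo (-(n:ℤ)) (n:ℤ), ρ k ^ 2) ^ ((3:ℝ)/2) := by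
  set S : ℝ := ∑ k ∈ Finset.Ioo (-(n:ℤ)) (n:ℤ), ρ k ^ 2 with hS
  have hS0 : 0 ≤ S := Finset.sum_nonneg fun _ _ => sq_nonneg _
  set ρn : ℤ → ℝ := fun k => if |k| < (n:ℤ) then |ρ k| else 0 with hρn
  set en : ℤ → ℝ := fun k => if |k| < (n:ℤ) then (1:ℝ) else 0 with hen
  set C : ℤ → ℝ := zconv ρn en with hC
  set L : ℝ := l2normZ C with hL
  have hterm_nonneg : ∀ c m : ℤ, 0 ≤ ρn m * en (c - m) := by
    intro c m
    apply mul_nonneg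
    · simp only [hρn]; split <;> positivity
    · simp only [hen]; split <;> positivity
  have hterm_summable : ∀ c : ℤ, Summable fun m => ρn m * en (c - m) := by
    intro c
    apply summable_of_ne_finset_zero (s := Finset.Ioo (-(n:ℤ)) (n:ℤ))
    intro m hm
    simp only [Finset.mem_Ioo, not_and_or, not_lt] at hm
    have h1 : ¬ |m| < (n:ℤ) := by rw [abs_lt]; omega
    simp [hρn, h1]
  have hC_nonneg : ∀ c, 0 ≤ C c := fun c => tsum_nonneg (hterm_nonneg c)
  have hCfin : ∀ c : ℤ, c ∉ Finset.Ioo (-(2*(n:ℤ))) (2*n) → C c = 0 := by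
    intro c hc
    simp only [Finset.mem_Ioo, not_and_or, not_lt] at hc
    have hz : ∀ m, ρn m * en (c - m) = 0 := by
      intro m
      by_cases h1 : |m| < (n:ℤ)
      · have h2 : ¬ |c - m| < (n:ℤ) := by rw [abs_lt] at h1 ⊢; omega
        simp [hen, h2]
      · simp [hρn, h1]
    calc C c = ∑' m : ℤ, ρn m * en (c - m) := rfl
      _ = ∑' _m : ℤ, (0:ℝ) := tsum_congr hz
      _ = 0 := tsum_zero
  have hCsq_summable : Summable fun c => C c ^ 2 := by
    apply summable_of_ne_finset_zero (s := Finset.Ioo (-(2*(n:ℤ))) (2*n))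
    intro c hc
    rw [hCfin c hc]
    norm_num
  -- bound the i-sum by the convolution
  have hF : ∀ j ∈ Finset.range n, (∑ i ∈ Finset.range n, |ρ ((i:ℤ) - j)|) ≤ C (-(j:ℤ)) := by
    intro j hj
    rw [Finset.mem_range] at hj
    have heq : ∀ i ∈ Finset.range n,
        |ρ ((i:ℤ) - j)| = ρn ((i:ℤ) - j) * en ((-(j:ℤ)) - ((i:ℤ) - j)) := by
      intro i hi
      rw [Finset.mem_range] at hi
      have h1 : |(i:ℤ) - j| < (n:ℤ) := by rw [abs_lt]; omega
      have h2 : |(-(j:ℤ)) - ((i:ℤ) - j)| < (n:ℤ) := by rw [abs_lt]; omega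
      simp [hρn, hen, h1, h2]
    rw [Finset.sum_congr rfl heq,
      ← Finset.sum_image (f := fun m : ℤ => ρn m * en ((-(j:ℤ)) - m))
        (g := fun i : ℕ => (i:ℤ) - j) (fun a _ b _ h => by simpa using h)]
    exact Summable.sum_le_tsum _ (fun m _ => hterm_nonneg _ m) (hterm_summable _)
  -- bound the l-sum by Cauchy-Schwarz
  have hG : ∀ k ∈ Finset.range n,
      (∑ l ∈ Finset.range n, |ρ ((k:ℤ) - l)|) ≤ Real.sqrt n * Real.sqrt S := by
    intro k hk
    rw [Finset.mem_range] at hk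
    have h1 : (∑ l ∈ Finset.range n, |ρ ((k:ℤ) - l)|) ^ 2 ≤ (n:ℝ) * S := by
      calc (∑ l ∈ Finset.range n, |ρ ((k:ℤ) - l)|) ^ 2
          = (∑ l ∈ Finset.range n, 1 * |ρ ((k:ℤ) - l)|) ^ 2 := by simp
        _ ≤ (∑ _l ∈ Finset.range n, (1:ℝ) ^ 2) * ∑ l ∈ Finset.range n, |ρ ((k:ℤ) - l)| ^ 2 :=
            Finset.sum_mul_sq_le_sq_mul_sq _ _ _
        _ = (n:ℝ) * ∑ l ∈ Finset.range n, ρ ((k:ℤ) - l) ^ 2 := by simp [sq_abs]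
        _ ≤ (n:ℝ) * S := by
            have := sum_shift_le (fun m => ρ m ^ 2) (fun m => sq_nonneg _) n k hk
            exact mul_le_mul_of_nonneg_left this (by positivity)
    have h2 : 0 ≤ ∑ l ∈ Finset.range n, |ρ ((k:ℤ) - l)| :=
      Finset.sum_nonneg fun _ _ => abs_nonneg _
    calc (∑ l ∈ Finset.range n, |ρ ((k:ℤ) - l)|)
        = Real.sqrt ((∑ l ∈ Finset.range n, |ρ ((k:ℤ) - l)|) ^ 2) := (Real.sqrt_sq h2).symm
      _ ≤ Real.sqrt ((n:ℝ) * S) := Real.sqrt_le_sqrt h1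
      _ = Real.sqrt n * Real.sqrt S := Real.sqrt_mul (by positivity) _
  -- bound the sum of C(-j)
  have hT : ∑ j ∈ Finset.range n, C (-(j:ℤ)) ^ 2 ≤ ∑' c, C c ^ 2 := by
    rw [← Finset.sum_image (f := fun c : ℤ => C c ^ 2)
      (g := fun j : ℕ => -(j:ℤ)) (fun a _ b _ h => by simpa using h)]
    exact Summable.sum_le_tsum _ (fun _ _ => sq_nonneg _) hCsq_summable
  have hCj : ∑ j ∈ Finset.range n, C (-(j:ℤ)) ≤ Real.sqrt n * L := by
    have h1 : (∑ j ∈ Finset.range n, C (-(j:ℤ))) ^ 2 ≤ (n:ℝ) * ∑' c, C c ^ 2 := by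
      calc (∑ j ∈ Finset.range n, C (-(j:ℤ))) ^ 2
          = (∑ j ∈ Finset.range n, 1 * C (-(j:ℤ))) ^ 2 := by simp
        _ ≤ (∑ _j ∈ Finset.range n, (1:ℝ) ^ 2) * ∑ j ∈ Finset.range n, C (-(j:ℤ)) ^ 2 :=
            Finset.sum_mul_sq_le_sq_mul_sq _ _ _
        _ ≤ (n:ℝ) * ∑' c, C c ^ 2 := by
            simp only [one_pow, Finset.sum_const, Finset.card_range, nsmul_eq_mul, mul_one]
            exact mul_le_mul_of_nonneg_left hT (by positivity)
    have h2 : 0 ≤ ∑ j ∈ Finset.range n, C (-(j:ℤ)) :=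
      Finset.sum_nonneg fun j _ => hC_nonneg _
    calc (∑ j ∈ Finset.range n, C (-(j:ℤ)))
        = Real.sqrt ((∑ j ∈ Finset.range n, C (-(j:ℤ))) ^ 2) := (Real.sqrt_sq h2).symm
      _ ≤ Real.sqrt ((n:ℝ) * ∑' c, C c ^ 2) := Real.sqrt_le_sqrt h1
      _ = Real.sqrt n * L := Real.sqrt_mul (by positivity) _
  have hL0 : 0 ≤ L := Real.sqrt_nonneg _
  -- main chain
  calc (∑ i ∈ Finset.range n, ∑ j ∈ Finset.range n, ∑ k ∈ Finset.range n,
        ∑ l ∈ Finset.range n, ρ ((j:ℤ) - k) ^ 2 * |ρ ((i:ℤ) - j) * ρ ((k:ℤ) - l)|)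
      = ∑ j ∈ Finset.range n, ∑ k ∈ Finset.range n, ρ ((j:ℤ) - k) ^ 2 *
          ((∑ i ∈ Finset.range n, |ρ ((i:ℤ) - j)|) * (∑ l ∈ Finset.range n, |ρ ((k:ℤ) - l)|)) := by
        rw [Finset.sum_comm]
        refine Finset.sum_congr rfl fun j _ => ?_
        rw [Finset.sum_comm]
        refine Finset.sum_congr rfl fun k _ => ?_
        rw [Finset.sum_mul_sum, Finset.mul_sum]
        refine Finset.sum_congr rfl fun i _ => ?_
        rw [Finset.mul_sum]
        refine Finset.sum_congr rfl fun l _ => ?_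
        rw [abs_mul]
    _ ≤ ∑ j ∈ Finset.range n, ∑ k ∈ Finset.range n, ρ ((j:ℤ) - k) ^ 2 *
          (C (-(j:ℤ)) * (Real.sqrt n * Real.sqrt S)) := by
        refine Finset.sum_le_sum fun j hj => Finset.sum_le_sum fun k hk => ?_
        refine mul_le_mul_of_nonneg_left ?_ (sq_nonneg _)
        exact mul_le_mul (hF j hj) (hG k hk)
          (Finset.sum_nonneg fun _ _ => abs_nonneg _) (hC_nonneg _)
    _ = (Real.sqrt n * Real.sqrt S) *
          ∑ j ∈ Finset.range n, C (-(j:ℤ)) * ∑ k ∈ Finset.range n, ρ ((j:ℤ) - k) ^ 2 := by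
        rw [Finset.mul_sum]
        refine Finset.sum_congr rfl fun j _ => ?_
        rw [Finset.mul_sum, Finset.mul_sum]
        refine Finset.sum_congr rfl fun k _ => ?_
        ring
    _ ≤ (Real.sqrt n * Real.sqrt S) * ∑ j ∈ Finset.range n, C (-(j:ℤ)) * S := by
        refine mul_le_mul_of_nonneg_left (Finset.sum_le_sum fun j hj => ?_) (by positivity)
        refine mul_le_mul_of_nonneg_left ?_ (hC_nonneg _)
        exact sum_shift_le (fun m => ρ m ^ 2) (fun m => sq_nonneg _) n j (Finset.mem_range.mp hj)
    _ = (Real.sqrt n * Real.sqrt S * S) * ∑ j ∈ Finset.range n, C (-(j:ℤ)) := by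
        rw [← Finset.sum_mul]; ring
    _ ≤ (Real.sqrt n * Real.sqrt S * S) * (Real.sqrt n * L) := by
        refine mul_le_mul_of_nonneg_left hCj (by positivity)
    _ = (n:ℝ) * L * S ^ ((3:ℝ)/2) := by
        have h1 : Real.sqrt n * Real.sqrt n = (n:ℝ) := Real.mul_self_sqrt (by positivity)
        have h2 : S ^ ((3:ℝ)/2) = S * Real.sqrt S := by
          rw [show (3:ℝ)/2 = 1 + 1/2 by norm_num, Real.rpow_add' hS0 (by norm_num),
            Real.rpow_one, ← Real.sqrt_eq_rpow]
        calc Real.sqrt n * Real.sqrt S * S * (Real.sqrt n * L)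
            = (Real.sqrt n * Real.sqrt n) * (L * (S * Real.sqrt S)) := by ring
          _ = (n:ℝ) * L * (S * Real.sqrt S) := by rw [h1]; ring
          _ = (n:ℝ) * L * S ^ ((3:ℝ)/2) := by rw [h2]

end
end

section
/- Let ρ : ℤ → ℝ satisfy |ρ(k)| ≤ 1 for all k ∈ ℤ, and let N, n be integers with 1 ≤ N ≤ n. Set ρ_n(k) := |ρ(k)|·1_{|k|<n} and 1_n(k) := 1_{|k|<n}. Then (1/n)·‖ρ_n ∗ 1_n‖_{ℓ²(ℤ)} ≤ 2·(Σ_{N ≤ |k| < n} ρ(k)²)^{1/2} + 2·(2N+1)·n^{−1/2}. -/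
open scoped BigOperators

noncomputable section

/-- Minkowski inequality for pairs over a finset. -/
lemma minkowski_finset (s : Finset ℤ) (a b : ℤ → ℝ) :
    Real.sqrt (∑ k ∈ s, (a k + b k) ^ 2) ≤
      Real.sqrt (∑ k ∈ s, a k ^ 2) + Real.sqrt (∑ k ∈ s, b k ^ 2) := by
  have ha : (0:ℝ) ≤ ∑ k ∈ s, a k ^ 2 := Finset.sum_nonneg fun _ _ => sq_nonneg _
  have hb : (0:ℝ) ≤ ∑ k ∈ s, b k ^ 2 := Finset.sum_nonneg fun _ _ => sq_nonneg _
  have cs := Real.sum_mul_le_sqrt_mul_sqrt s a b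
  have key : ∑ k ∈ s, (a k + b k) ^ 2 ≤
      (Real.sqrt (∑ k ∈ s, a k ^ 2) + Real.sqrt (∑ k ∈ s, b k ^ 2)) ^ 2 := by
    have e1 : ∑ k ∈ s, (a k + b k) ^ 2
        = ∑ k ∈ s, a k ^ 2 + 2 * (∑ k ∈ s, a k * b k) + ∑ k ∈ s, b k ^ 2 := by
      rw [Finset.mul_sum, ← Finset.sum_add_distrib, ← Finset.sum_add_distrib]
      apply Finset.sum_congr rfl; intros; ring
    rw [e1, add_sq, Real.sq_sqrt ha, Real.sq_sqrt hb]
    linarith [cs]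
  calc Real.sqrt (∑ k ∈ s, (a k + b k) ^ 2)
      ≤ Real.sqrt ((Real.sqrt (∑ k ∈ s, a k ^ 2) + Real.sqrt (∑ k ∈ s, b k ^ 2)) ^ 2) :=
        Real.sqrt_le_sqrt key
    _ = _ := Real.sqrt_sq (by positivity)

/-- if `|ρ(k)| ≤ 1` for all `k` and `1 ≤ N ≤ n`, then, with
`ρ_n(k) = |ρ(k)|·1_{|k|<n}` and `1_n(k) = 1_{|k|<n}`,
`(1/n)·‖ρ_n ∗ 1_n‖_{ℓ²} ≤ 2·(Σ_{N≤|k|<n} ρ(k)²)^{1/2} + 2·(2N+1)·n^{−1/2}`. -/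
theorem conv_l2_truncation_bound (ρ : ℤ → ℝ) (hρ : ∀ k, |ρ k| ≤ 1)
    (N n : ℕ) (hN : 1 ≤ N) (hNn : N ≤ n) :
    (1 / (n : ℝ)) *
        l2normZ (zconv (fun k => if |k| < (n:ℤ) then |ρ k| else 0)
          (fun k => if |k| < (n:ℤ) then (1:ℝ) else 0)) ≤
      2 * Real.sqrt (∑ k ∈ (Finset.Ioo (-(n:ℤ)) (n:ℤ)).filter (fun k => (N:ℤ) ≤ |k|), ρ k ^ 2)
        + 2 * (2 * (N : ℝ) + 1) * (n : ℝ) ^ (-(1:ℝ)/2) := by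
  have hn1 : 1 ≤ n := le_trans hN hNn
  have hnpos : (0:ℝ) < n := by exact_mod_cast hn1
  set f : ℤ → ℝ := fun k => if |k| < (n:ℤ) then |ρ k| else 0 with hf
  set g : ℤ → ℝ := fun k => if |k| < (n:ℤ) then (1:ℝ) else 0 with hg
  set T : Finset ℤ := Finset.Ioo (-(n:ℤ)) (n:ℤ) with hT
  set S : Finset ℤ := Finset.Ioo (-(2*(n:ℤ))) (2*(n:ℤ)) with hS
  have hf0 : ∀ j, j ∉ T → f j = 0 := by
    intro j hj
    simp only [hf]
    rw [if_neg]
    intro h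
    rcases abs_lt.mp h with ⟨h1, h2⟩
    exact hj (by simp only [hT, Finset.mem_Ioo]; exact ⟨h1, h2⟩)
  have hgsq : ∀ m : ℤ, g m ^ 2 = g m := by
    intro m; simp only [hg]; split <;> norm_num
  have hg0 : ∀ m : ℤ, 0 ≤ g m := by
    intro m; simp only [hg]; split <;> norm_num
  have hfsq1 : ∀ j, f j ^ 2 ≤ 1 := by
    intro j
    have h0 : 0 ≤ f j := by
      simp only [hf]
      split
      · exact abs_nonneg _
      · exact le_refl 0
    have h1 : f j ≤ 1 := by
      simp only [hf]
      split
      · exact hρ j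
      · norm_num
    nlinarith
  have hconv : ∀ k, zconv f g k = ∑ j ∈ T, f j * g (k - j) := by
    intro k
    apply tsum_eq_sum
    intro j hj
    rw [hf0 j hj, zero_mul]
  have hzero : ∀ k, k ∉ S → zconv f g k = 0 := by
    intro k hk
    rw [hconv]
    apply Finset.sum_eq_zero
    intro j hj
    have hjT : -(n:ℤ) < j ∧ j < n := by simpa [hT, Finset.mem_Ioo] using hj
    have hkS : ¬(-(2*(n:ℤ)) < k ∧ k < 2*(n:ℤ)) := by simpa [hS, Finset.mem_Ioo] using hk
    have hgz : g (k - j) = 0 := by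
      simp only [hg]
      rw [if_neg]
      rw [abs_lt]
      omega
    rw [hgz, mul_zero]
  -- column-sum bound for g
  have hgsum : ∀ j : ℤ, ∑ k ∈ S, g (k - j) ≤ 2*(n:ℝ) := by
    intro j
    have e : ∑ k ∈ S, g (k - j) = ((S.filter (fun k => |k - j| < (n:ℤ))).card : ℝ) := by
      rw [← Finset.sum_boole]
    rw [e]
    have hsub : S.filter (fun k => |k - j| < (n:ℤ)) ⊆ Finset.Ioo (j - n) (j + n) := by
      intro k hk
      rw [Finset.mem_filter] at hk
      rcases abs_lt.mp hk.2 with ⟨h1, h2⟩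
      rw [Finset.mem_Ioo]
      omega
    have hcard : (S.filter (fun k => |k - j| < (n:ℤ))).card ≤ (Finset.Ioo (j - (n:ℤ)) (j + n)).card :=
      Finset.card_le_card hsub
    have hIoo : (Finset.Ioo (j - (n:ℤ)) (j + n)).card = (2*n - 1 : ℤ).toNat := by
      rw [Int.card_Ioo]
      congr 1
      ring
    have : ((S.filter (fun k => |k - j| < (n:ℤ))).card : ℝ) ≤ ((2*n - 1 : ℤ).toNat : ℝ) := by
      exact_mod_cast hIoo ▸ hcard
    refine this.trans ?_
    have : ((2*n - 1 : ℤ).toNat : ℝ) ≤ ((2*n : ℤ) : ℝ) := by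
      have h1 : ((2*n - 1 : ℤ).toNat : ℤ) ≤ (2*n : ℤ) := by omega
      exact_mod_cast h1
    simpa using this
  -- key Young-type bound
  have hkey : ∀ E : Finset ℤ, ∑ k ∈ S, (∑ j ∈ E, f j * g (k - j)) ^ 2 ≤
      (E.card : ℝ) * ((∑ j ∈ E, f j ^ 2) * (2*(n:ℝ))) := by
    intro E
    have step1 : ∀ k : ℤ, (∑ j ∈ E, f j * g (k - j)) ^ 2 ≤
        (E.card : ℝ) * ∑ j ∈ E, f j ^ 2 * g (k - j) := by
      intro k
      have cs := Finset.sum_mul_sq_le_sq_mul_sq E (fun j => f j * g (k - j)) (fun _ => (1:ℝ))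
      simp only [mul_one, one_pow, Finset.sum_const, nsmul_eq_mul] at cs
      have heq : ∑ j ∈ E, (f j * g (k - j)) ^ 2 = ∑ j ∈ E, f j ^ 2 * g (k - j) := by
        apply Finset.sum_congr rfl
        intro j _
        rw [mul_pow, hgsq]
      rw [heq] at cs
      linarith [cs]
    calc ∑ k ∈ S, (∑ j ∈ E, f j * g (k - j)) ^ 2
        ≤ ∑ k ∈ S, (E.card : ℝ) * ∑ j ∈ E, f j ^ 2 * g (k - j) :=
          Finset.sum_le_sum (fun k _ => step1 k)
      _ = (E.card : ℝ) * ∑ j ∈ E, f j ^ 2 * ∑ k ∈ S, g (k - j) := by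
          rw [← Finset.mul_sum, Finset.sum_comm]
          congr 1
          apply Finset.sum_congr rfl
          intro j _
          rw [Finset.mul_sum]
      _ ≤ (E.card : ℝ) * ∑ j ∈ E, f j ^ 2 * (2*(n:ℝ)) := by
          apply mul_le_mul_of_nonneg_left _ (Nat.cast_nonneg _)
          apply Finset.sum_le_sum
          intro j _
          exact mul_le_mul_of_nonneg_left (hgsum j) (sq_nonneg _)
      _ = (E.card : ℝ) * ((∑ j ∈ E, f j ^ 2) * (2*(n:ℝ))) := by
          rw [← Finset.sum_mul]
  -- split into high and low frequencies
  set F : Finset ℤ := T.filter (fun k => (N:ℤ) ≤ |k|) with hFdef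
  set G : Finset ℤ := T.filter (fun k => ¬ (N:ℤ) ≤ |k|) with hGdef
  set X : ℝ := ∑ k ∈ F, ρ k ^ 2 with hX
  have hXnn : 0 ≤ X := Finset.sum_nonneg fun _ _ => sq_nonneg _
  -- cardinalities
  have hTcard : (T.card : ℝ) ≤ 2*(n:ℝ) := by
    have : T.card = (2*n - 1 : ℤ).toNat := by
      rw [hT, Int.card_Ioo]; congr 1; ring
    rw [this]
    have h1 : (((2*n - 1) : ℤ).toNat : ℤ) ≤ (2*n : ℤ) := by omega
    exact_mod_cast h1
  have hFcard : (F.card : ℝ) ≤ 2*(n:ℝ) :=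
    le_trans (by exact_mod_cast Finset.card_le_card (Finset.filter_subset _ _)) hTcard
  have hGcard : (G.card : ℝ) ≤ 2*(N:ℝ) + 1 := by
    have hsub : G ⊆ Finset.Ioo (-(N:ℤ)) (N:ℤ) := by
      intro j hj
      rw [hGdef, Finset.mem_filter] at hj
      have := hj.2
      rw [not_le] at this
      rcases abs_lt.mp this with ⟨h1, h2⟩
      rw [Finset.mem_Ioo]
      exact ⟨h1, h2⟩
    have h1 : G.card ≤ (Finset.Ioo (-(N:ℤ)) (N:ℤ)).card := Finset.card_le_card hsub
    have h2 : (Finset.Ioo (-(N:ℤ)) (N:ℤ)).card = (2*N - 1 : ℤ).toNat := by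
      rw [Int.card_Ioo]; congr 1; ring
    have h3 : (G.card : ℤ) ≤ 2*N + 1 := by
      rw [h2] at h1; omega
    exact_mod_cast h3
  -- f^2 on F equals rho^2 there
  have hfF : ∑ j ∈ F, f j ^ 2 = X := by
    apply Finset.sum_congr rfl
    intro j hj
    have hjT : j ∈ T := Finset.mem_filter.mp hj |>.1
    have hjlt : |j| < (n:ℤ) := by
      rw [hT, Finset.mem_Ioo] at hjT
      rw [abs_lt]; exact hjT
    simp only [hf]
    rw [if_pos hjlt, sq_abs]
  have hfG : ∑ j ∈ G, f j ^ 2 ≤ 2*(N:ℝ) + 1 := by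
    calc ∑ j ∈ G, f j ^ 2 ≤ ∑ j ∈ G, (1:ℝ) := Finset.sum_le_sum fun j _ => hfsq1 j
      _ = (G.card : ℝ) := by simp
      _ ≤ 2*(N:ℝ) + 1 := hGcard
  -- bounds on the two pieces
  have hA : ∑ k ∈ S, (∑ j ∈ F, f j * g (k - j)) ^ 2 ≤ (2*(n:ℝ))^2 * X := by
    refine (hkey F).trans ?_
    rw [hfF]
    calc (F.card : ℝ) * (X * (2*(n:ℝ))) ≤ (2*(n:ℝ)) * (X * (2*(n:ℝ))) := by
          apply mul_le_mul_of_nonneg_right hFcard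
          positivity
      _ = (2*(n:ℝ))^2 * X := by ring
  have hB : ∑ k ∈ S, (∑ j ∈ G, f j * g (k - j)) ^ 2 ≤ (2*(N:ℝ)+1)^2 * (2*(n:ℝ)) := by
    refine (hkey G).trans ?_
    have h2 : (0:ℝ) ≤ 2*(n:ℝ) := by positivity
    calc (G.card : ℝ) * ((∑ j ∈ G, f j ^ 2) * (2*(n:ℝ)))
        ≤ (2*(N:ℝ)+1) * ((2*(N:ℝ)+1) * (2*(n:ℝ))) := by
          apply mul_le_mul hGcard (mul_le_mul_of_nonneg_right hfG h2) _ (by positivity)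
          apply mul_nonneg (Finset.sum_nonneg fun _ _ => sq_nonneg _) h2
      _ = (2*(N:ℝ)+1)^2 * (2*(n:ℝ)) := by ring
  -- split the convolution
  have hsplit : ∀ k, zconv f g k =
      (∑ j ∈ F, f j * g (k - j)) + (∑ j ∈ G, f j * g (k - j)) := by
    intro k
    rw [hconv, hFdef, hGdef]
    exact (Finset.sum_filter_add_sum_filter_not T _ _).symm
  -- the l2 norm as a finite sum
  have hl2 : l2normZ (zconv f g) = Real.sqrt (∑ k ∈ S, (zconv f g k) ^ 2) := by
    unfold l2normZ
    congr 1
    apply tsum_eq_sum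
    intro k hk
    rw [hzero k hk]
    norm_num
  -- put things together
  have hnorm : l2normZ (zconv f g) ≤ 2*(n:ℝ) * Real.sqrt X + (2*(N:ℝ)+1) * Real.sqrt (2*(n:ℝ)) := by
    rw [hl2]
    have e : ∑ k ∈ S, (zconv f g k) ^ 2 =
        ∑ k ∈ S, ((∑ j ∈ F, f j * g (k - j)) + (∑ j ∈ G, f j * g (k - j))) ^ 2 := by
      apply Finset.sum_congr rfl
      intro k _
      rw [hsplit]
    rw [e]
    refine (minkowski_finset S _ _).trans ?_
    have b1 : Real.sqrt (∑ k ∈ S, (∑ j ∈ F, f j * g (k - j)) ^ 2) ≤ 2*(n:ℝ) * Real.sqrt X := by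
      refine (Real.sqrt_le_sqrt hA).trans ?_
      rw [Real.sqrt_mul (by positivity), Real.sqrt_sq (by positivity)]
    have b2 : Real.sqrt (∑ k ∈ S, (∑ j ∈ G, f j * g (k - j)) ^ 2) ≤
        (2*(N:ℝ)+1) * Real.sqrt (2*(n:ℝ)) := by
      refine (Real.sqrt_le_sqrt hB).trans ?_
      rw [Real.sqrt_mul (by positivity), Real.sqrt_sq (by positivity)]
    linarith
  -- final arithmetic
  have hrp : (n:ℝ) ^ (-(1:ℝ)/2) = (Real.sqrt n)⁻¹ := by
    rw [Real.sqrt_eq_rpow, ← Real.rpow_neg hnpos.le]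
    norm_num
  have hsq2 : Real.sqrt 2 ≤ 2 := by
    nlinarith [Real.sq_sqrt (by norm_num : (0:ℝ) ≤ 2), Real.sqrt_nonneg 2]
  have hsn : (0:ℝ) < Real.sqrt n := Real.sqrt_pos.mpr hnpos
  have hsrt2n : Real.sqrt (2*(n:ℝ)) = Real.sqrt 2 * Real.sqrt n := Real.sqrt_mul (by norm_num) _
  calc (1 / (n : ℝ)) * l2normZ (zconv f g)
      ≤ (1 / (n : ℝ)) * (2*(n:ℝ) * Real.sqrt X + (2*(N:ℝ)+1) * Real.sqrt (2*(n:ℝ))) := by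
        apply mul_le_mul_of_nonneg_left hnorm (by positivity)
    _ = 2 * Real.sqrt X + (2*(N:ℝ)+1) * (Real.sqrt 2 * Real.sqrt n) / n := by
        rw [hsrt2n]; field_simp
    _ ≤ 2 * Real.sqrt X + 2 * (2*(N:ℝ)+1) * (Real.sqrt n)⁻¹ := by
        have hNpos : (0:ℝ) ≤ 2*(N:ℝ)+1 := by positivity
        have hmul : (Real.sqrt n)⁻¹ * (n:ℝ) = Real.sqrt n := by
          rw [← Real.mul_self_sqrt hnpos.le]
          field_simp
          rw [Real.sqrt_sq hsn.le]
        have key2 : (2*(N:ℝ)+1) * (Real.sqrt 2 * Real.sqrt n) / n ≤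
            2 * (2*(N:ℝ)+1) * (Real.sqrt n)⁻¹ := by
          rw [div_le_iff₀ hnpos]
          calc (2*(N:ℝ)+1) * (Real.sqrt 2 * Real.sqrt n)
              ≤ (2*(N:ℝ)+1) * (2 * Real.sqrt n) := by
                apply mul_le_mul_of_nonneg_left _ hNpos
                exact mul_le_mul_of_nonneg_right hsq2 hsn.le
            _ = 2 * (2*(N:ℝ)+1) * ((Real.sqrt n)⁻¹ * (n:ℝ)) := by rw [hmul]; ring
            _ = 2 * (2*(N:ℝ)+1) * (Real.sqrt n)⁻¹ * n := by ring
        linarith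
    _ = 2 * Real.sqrt X + 2 * (2*(N:ℝ)+1) * (n:ℝ) ^ (-(1:ℝ)/2) := by rw [hrp]
end
end
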